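/- There exist a finite database, a set of functional dependencies, and an acyclic priority such that some g-repair is not an l-repair. Concretely: for r = {a, b, c, d} with conflict graph edges {a,b}, {a,c}, {a,d}, {b,c}, {b,d} (c and d not conflicting) and priority ≺ = {(c,a),(d,b)}, the set {c,d} is a g-repair but not an l-repair. -/
import Mathlib


/-- A relation is acyclic if no element is related to itself by the transitive closure. -/
def Acyclic {α : Type*} (prec : α → α → Prop) : Prop :=
  ∀ x, ¬ Relation.TransGen prec x x

/-- The global preference order on sets of tuples: `X ≪ Y`. -/
def ll {α : Type*} (prec : α → α → Prop) (X Y : Set α) : Prop :=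
  ∀ x ∈ X \ Y, ∃ y ∈ Y \ X, prec x y

/-- Closed neighborhood of `x` in the conflict graph. -/
def nbhd {α : Type*} (conflict : α → α → Prop) (x : α) : Set α :=
  {x} ∪ {y | conflict x y}

/-- The winnow operator: elements of `s` not dominated by any element of `s`. -/
def winnow {α : Type*} (prec : α → α → Prop) (s : Set α) : Set α :=
  {t ∈ s | ¬ ∃ t' ∈ s, prec t t'}

/-- A repair: a maximal subset of `r` containing no conflicting pair. -/
def IsRepair {α : Type*} (r : Set α) (conflict : α → α → Prop) (X : Set α) : Prop :=
  X ⊆ r ∧ (∀ a ∈ X, ∀ b ∈ X, ¬ conflict a b) ∧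
    ∀ y ∈ r, y ∉ X → ∃ a ∈ X, conflict y a

/-- A locally preferred repair: obtainable by iteratively choosing an undominated
tuple and removing it together with its conflict neighborhood. -/
def IsLRepair {α : Type*} (r : Set α) (conflict prec : α → α → Prop) (X : Set α) : Prop :=
  ∃ (n : ℕ) (x : Fin n → α), Function.Injective x ∧ X = Set.range x ∧
    (∀ i : Fin n, x i ∈ winnow prec (r \ {y | ∃ j, j < i ∧ y ∈ nbhd conflict (x j)})) ∧
    winnow prec (r \ {y | ∃ i, y ∈ nbhd conflict (x i)}) = ∅

/-- A globally preferred repair: a `≪`-maximal repair. -/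
def IsGRepair {α : Type*} (r : Set α) (conflict prec : α → α → Prop) (X : Set α) : Prop :=
  IsRepair r conflict X ∧ ∀ Y, IsRepair r conflict Y → ll prec X Y → Y = X

/-- a g-repair need not be an l-repair. On r = {a,b,c,d} (= Fin 4,
a=0, b=1, c=2, d=3) with all pairs conflicting except {c,d}, and priority
≺ = {(c,a),(d,b)}, the set {c,d} is a g-repair but not an l-repair. -/
theorem grepair_not_lrepair_example :
    let conflict : Fin 4 → Fin 4 → Prop := fun x y =>
      x ≠ y ∧ ¬ ((x = 2 ∧ y = 3) ∨ (x = 3 ∧ y = 2))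
    let prec : Fin 4 → Fin 4 → Prop := fun x y =>
      (x, y) = ((2 : Fin 4), (0 : Fin 4)) ∨ (x, y) = ((3 : Fin 4), (1 : Fin 4))
    Acyclic prec ∧
    IsGRepair Set.univ conflict prec {2, 3} ∧
    ¬ IsLRepair Set.univ conflict prec {2, 3} := by
  intro conflict prec
  have hprec : ∀ x y : Fin 4, prec x y ↔ ((x = 2 ∧ y = 0) ∨ (x = 3 ∧ y = 1)) := by
    intro x y
    simp [prec, Prod.ext_iff]
  have hconf : ∀ x y : Fin 4, conflict x y ↔
      (x ≠ y ∧ ¬ ((x = 2 ∧ y = 3) ∨ (x = 3 ∧ y = 2))) := fun x y => Iff.rfl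
  refine ⟨?_, ⟨⟨Set.subset_univ _, ?_, ?_⟩, ?_⟩, ?_⟩
  · -- Acyclic
    have key : ∀ x y : Fin 4, Relation.TransGen prec x y → prec x y := by
      intro x y h
      induction h with
      | single h => exact h
      | tail _ h2 ih =>
          exfalso
          rw [hprec] at ih h2
          rcases ih with ⟨_, hb⟩ | ⟨_, hb⟩ <;> rcases h2 with ⟨hb', _⟩ | ⟨hb', _⟩ <;>
            simp_all
    intro x hx
    have := key x x hx
    rw [hprec] at this
    rcases this with ⟨h1, h2⟩ | ⟨h1, h2⟩ <;> simp_all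
  · -- no conflict within {2,3}
    intro a ha b hb
    have ha' : a = 2 ∨ a = 3 := by simpa using ha
    have hb' : b = 2 ∨ b = 3 := by simpa using hb
    rw [hconf]
    rcases ha' with rfl | rfl <;> rcases hb' with rfl | rfl <;> simp
  · -- maximality
    intro y _ hy
    have hy2 : y ≠ 2 := fun h => hy (by simp [h])
    have hy3 : y ≠ 3 := fun h => hy (by simp [h])
    refine ⟨2, by simp, ?_⟩
    rw [hconf]
    refine ⟨hy2, ?_⟩
    rintro (⟨rfl, _⟩ | ⟨rfl, _⟩) <;> simp_all
  · -- ≪-maximality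
    intro Y hY hll
    obtain ⟨-, hind, -⟩ := hY
    have h2 : (2 : Fin 4) ∈ Y := by
      by_contra h2
      obtain ⟨y, ⟨hyY, hyN⟩, hp⟩ := hll 2 ⟨by simp, h2⟩
      rw [hprec] at hp
      rcases hp with ⟨_, rfl⟩ | ⟨h, _⟩
      · -- 0 ∈ Y; now 3 : if 3 ∈ Y then conflict 0 3
        by_cases h3 : (3 : Fin 4) ∈ Y
        · exact hind 0 hyY 3 h3 (by rw [hconf]; simp)
        · obtain ⟨z, ⟨hzY, hzN⟩, hpz⟩ := hll 3 ⟨by simp, h3⟩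
          rw [hprec] at hpz
          rcases hpz with ⟨h, _⟩ | ⟨_, rfl⟩
          · simp at h
          · exact hind 0 hyY 1 hzY (by rw [hconf]; simp)
      · simp at h
    have h3 : (3 : Fin 4) ∈ Y := by
      by_contra h3
      obtain ⟨z, ⟨hzY, hzN⟩, hpz⟩ := hll 3 ⟨by simp, h3⟩
      rw [hprec] at hpz
      rcases hpz with ⟨h, _⟩ | ⟨_, rfl⟩
      · simp at h
      · exact hind 2 h2 1 hzY (by rw [hconf]; simp)
    apply Set.eq_of_subset_of_subset
    · intro y hyY
      by_contra hy
      have hy2 : y ≠ 2 := fun h => hy (by simp [h])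
      have hy3 : y ≠ 3 := fun h => hy (by simp [h])
      exact hind y hyY 2 h2 (by rw [hconf]; exact ⟨hy2, by rintro (⟨_, h⟩ | ⟨rfl, _⟩) <;> simp_all⟩)
    · rintro y (rfl | hy)
      · exact h2
      · rw [Set.mem_singleton_iff] at hy; subst hy; exact h3
  · -- not an l-repair
    rintro ⟨n, x, hinj, hrange, hstep, -⟩
    have h2 : (2 : Fin 4) ∈ Set.range x := by rw [← hrange]; simp
    obtain ⟨i, hi⟩ := h2
    have hn : 0 < n := Fin.pos_iff_nonempty.mpr ⟨i⟩
    have h0 := hstep ⟨0, hn⟩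
    obtain ⟨hmem, hund⟩ := h0
    have hx0 : x ⟨0, hn⟩ ∈ ({2, 3} : Set (Fin 4)) := by rw [hrange]; exact ⟨⟨0, hn⟩, rfl⟩
    apply hund
    rcases hx0 with h | h
    · refine ⟨0, ⟨trivial, ?_⟩, by rw [hprec, h]; simp⟩
      rintro ⟨j, hj, _⟩
      exact absurd hj (by simp [Fin.lt_def])
    · rw [Set.mem_singleton_iff] at h
      refine ⟨1, ⟨trivial, ?_⟩, by rw [hprec, h]; simp⟩
      rintro ⟨j, hj, _⟩
      exact absurd hj (by simp [Fin.lt_def])
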